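/- Let q ∤ 2 be a prime of a number field K where the elliptic curve C has good reduction, and let η be a ramified quadratic character of G_{K_q}. Then the 2-primary torsion of the quadratic twist satisfies C^η(K_q)[2^∞] = C^η(K_q)[2]. -/
import Mathlib


/-- Let `q ∤ 2` be a prime of `K` where the elliptic curve `C` has
good reduction and `η` a ramified quadratic character of `G_{K_q}`.  Then
`C^η(K_q)[2^∞] = C^η(K_q)[2]`.  Abstract formalization: `G = G_{K_q}` acts on
`A = C(K̄_q)`; `I ≤ G` is the inertia subgroup (so `A^I`-rationality over `K_q^ur`);
good reduction at odd residue characteristic gives `C(K_q^ur)[2^∞] = C[2^∞]`, i.e.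
all 2-power torsion of `A` is fixed by `I` (hypothesis `hgood`); `η` ramified means
`η` is nontrivial on `I`.  A point of `C^η(K_q)` is `a ∈ A` with
`σ • a = η(σ) • a` for all `σ` (via the canonical identification `C ≅ C^η` over
`K̄_q`).  The conclusion `2 • a = 0` says any 2-power torsion point of `C^η(K_q)` is
2-torsion; the reverse inclusion is trivial. -/
theorem stmt9 {G A : Type*} [Group G] [AddCommGroup A] [DistribMulAction G A]
    (I : Subgroup G)
    (η : G →* ℤˣ) (hram : ∃ h ∈ I, η h = -1)
    (hgood : ∀ a : A, (∃ k : ℕ, 2 ^ k • a = 0) → ∀ h ∈ I, h • a = a)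
    (a : A) (ha : ∃ k : ℕ, 2 ^ k • a = 0)
    (htwist : ∀ σ : G, σ • a = (η σ : ℤ) • a) :
    2 • a = 0 := by
  obtain ⟨h, hI, hη⟩ := hram
  have h1 : h • a = a := hgood a ha h hI
  have h2 : h • a = -a := by
    rw [htwist h, hη]
    simp
  have h3 : a = -a := h1.symm.trans h2
  have : a + a = 0 := by nth_rewrite 2 [h3]; abel
  simpa [two_smul] using this
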